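/- Lemma (existence of the relative value function / Abel limit of a centered function under a unichain stochastic matrix): Let S be a nonempty finite type and let M : S → S → ℝ be a row-stochastic matrix such that for every s' ∈ S the limit μ(s') = lim_{T→∞} (1/T) ∑_{t=0}^{T−1} (M^t)(s,s') exists and does not depend on s ∈ S. Let f : S → ℝ satisfy ∑_{s'} μ(s') f(s') = 0. Then for every s ∈ S, the limit lim_{γ→1⁻} ∑_{t=0}^∞ γ^t (M^t f)(s) exists in ℝ (where for each γ ∈ (0,1) the series converges absolutely). -/

import Mathlib

open Filter Finset Topology

noncomputable section

private lemma summable_geom_mul {γ : ℝ} (h0 : 0 < γ) (h1 : γ < 1) (b : ℕ → ℝ) (C : ℝ)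
    (hb : ∀ t, |b t| ≤ C * ((t:ℝ)+1)) : Summable (fun t : ℕ => γ^t * b t) := by
  have hn : ‖γ‖ < 1 := by rw [Real.norm_eq_abs, abs_of_pos h0]; exact h1
  have hs : Summable (fun t : ℕ => C * (((t:ℝ)+1) * γ^t)) := by
    have := (summable_pow_mul_geometric_of_norm_lt_one 1 hn (R := ℝ)).add
      (summable_geometric_of_norm_lt_one hn)
    simpa [add_mul, pow_one] using this.mul_left C
  refine Summable.of_norm (hs.of_nonneg_of_le (fun t => norm_nonneg _) (fun t => ?_))
  rw [Real.norm_eq_abs, abs_mul, abs_pow, abs_of_pos h0]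
  calc γ^t * |b t| ≤ γ^t * (C * ((t:ℝ)+1)) := by
        exact mul_le_mul_of_nonneg_left (hb t) (pow_nonneg h0.le t)
    _ = C * (((t:ℝ)+1) * γ^t) := by ring

private lemma summable_geom_mul' {γ : ℝ} (h0 : 0 < γ) (h1 : γ < 1) :
    Summable (fun t : ℕ => ((t:ℝ)+1) * γ^t) := by
  have hn : ‖γ‖ < 1 := by rw [Real.norm_eq_abs, abs_of_pos h0]; exact h1
  have := (summable_pow_mul_geometric_of_norm_lt_one 1 hn (R := ℝ)).add
    (summable_geometric_of_norm_lt_one hn)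
  simpa [add_mul, pow_one] using this

private lemma tsum_geom_mul' {γ : ℝ} (h0 : 0 < γ) (h1 : γ < 1) :
    (∑' t : ℕ, ((t:ℝ)+1) * γ^t) = ((1-γ)^2)⁻¹ := by
  have hn : ‖γ‖ < 1 := by rw [Real.norm_eq_abs, abs_of_pos h0]; exact h1
  have h2 : (∑' t : ℕ, (t:ℝ) * γ^t) = γ / (1-γ)^2 := tsum_coe_mul_geometric_of_norm_lt_one hn
  have h3 : (∑' t : ℕ, γ^t) = (1-γ)⁻¹ := tsum_geometric_of_lt_one h0.le h1
  have hs2 : Summable (fun t : ℕ => (t:ℝ) * γ^t) := by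
    simpa [pow_one] using (summable_pow_mul_geometric_of_norm_lt_one 1 hn (R := ℝ))
  have h1γ : (1:ℝ) - γ ≠ 0 := by linarith
  have : (∑' t : ℕ, ((t:ℝ)+1) * γ^t) = (∑' t : ℕ, ((t:ℝ) * γ^t + γ^t)) := by
    congr 1; funext t; ring
  rw [this, Summable.tsum_add hs2 (summable_geometric_of_norm_lt_one hn), h2, h3]
  field_simp
  ring

private lemma abel_mean_zero (a : ℕ → ℝ) (C : ℝ) (hC : ∀ t, |a t| ≤ C)
    (hces : Tendsto (fun T : ℕ => (∑ t ∈ range T, a t)/(T:ℝ)) atTop (𝓝 0)) :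
    Tendsto (fun γ : ℝ => (1 - γ) * ∑' t : ℕ, γ^t * a t) (𝓝[<] (1:ℝ)) (𝓝 0) := by
  set A : ℕ → ℝ := fun T => ∑ t ∈ range T, a t with hA
  have hC0 : 0 ≤ C := le_trans (abs_nonneg _) (hC 0)
  have hAb : ∀ T : ℕ, |A T| ≤ C * T := by
    intro T
    calc |A T| ≤ ∑ t ∈ range T, |a t| := Finset.abs_sum_le_sum_abs _ _
      _ ≤ ∑ t ∈ range T, C := Finset.sum_le_sum (fun t _ => hC t)
      _ = C * T := by simp [mul_comm]
  have hb1 : ∀ t : ℕ, |A (t+1)| ≤ (C+1) * ((t:ℝ)+1) := by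
    intro t
    calc |A (t+1)| ≤ C * ((t:ℕ)+1 : ℕ) := hAb (t+1)
      _ ≤ (C+1) * ((t:ℝ)+1) := by push_cast; nlinarith [Nat.cast_nonneg (α := ℝ) t]
  have key : ∀ γ : ℝ, 0 < γ → γ < 1 →
      (1 - γ) * ∑' t : ℕ, γ^t * a t = (1-γ)^2 * ∑' t : ℕ, γ^t * A (t+1) := by
    intro γ h0 h1
    have hb0 : ∀ t : ℕ, |A t| ≤ (C+1) * ((t:ℝ)+1) := by
      intro t
      calc |A t| ≤ C * t := hAb t
        _ ≤ (C+1) * ((t:ℝ)+1) := by nlinarith [Nat.cast_nonneg (α := ℝ) t]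
    have S2 : Summable (fun t : ℕ => γ^t * A (t+1)) := summable_geom_mul h0 h1 _ _ hb1
    have S1 : Summable (fun t : ℕ => γ^t * A t) := summable_geom_mul h0 h1 _ _ hb0
    have hid : ∑' t : ℕ, γ^t * a t = (∑' t : ℕ, γ^t * A (t+1)) - ∑' t : ℕ, γ^t * A t := by
      rw [← Summable.tsum_sub S2 S1]
      congr 1; funext t
      have : a t = A (t+1) - A t := by simp [hA, Finset.sum_range_succ]
      rw [this]; ring
    have hshift : ∑' t : ℕ, γ^t * A t = γ * ∑' t : ℕ, γ^t * A (t+1) := by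
      rw [Summable.tsum_eq_zero_add S1]
      simp only [hA, pow_zero, Finset.range_zero, Finset.sum_empty, mul_zero, zero_add]
      rw [← tsum_mul_left]
      congr 1; funext t; ring
    rw [hid, hshift]; ring
  rw [NormedAddCommGroup.tendsto_nhds_zero]
  intro ε hε
  have hε4 : 0 < ε/4 := by linarith
  obtain ⟨N₀, hN₀⟩ := (Metric.tendsto_atTop.mp hces) (ε/4) hε4
  set N := max N₀ 1 with hNdef
  have hNbig : ∀ T, N ≤ T → |A T| ≤ (ε/4) * T := by
    intro T hT
    have h1 : 1 ≤ T := le_trans (le_max_right _ _) hT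
    have := hN₀ T (le_trans (le_max_left _ _) hT)
    rw [Real.dist_eq, sub_zero, abs_div, Nat.abs_cast] at this
    have hTpos : (0:ℝ) < T := by exact_mod_cast h1
    calc |A T| = |A T| / T * T := by field_simp
      _ ≤ (ε/4) * T := mul_le_mul_of_nonneg_right this.le hTpos.le
  set B : ℝ := ∑ t ∈ Finset.range N, |A (t+1)| with hB
  have hB0 : 0 ≤ B := Finset.sum_nonneg (fun t _ => abs_nonneg _)
  have main : ∀ γ : ℝ, 0 < γ → γ < 1 →
      |(1 - γ) * ∑' t : ℕ, γ^t * a t| ≤ (1-γ)^2 * B + ε/4 := by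
    intro γ h0 h1
    have hγ2 : (0:ℝ) < (1-γ)^2 := pow_pos (by linarith) 2
    have S2 : Summable (fun t : ℕ => γ^t * A (t+1)) := summable_geom_mul h0 h1 _ _ hb1
    rw [key γ h0 h1, abs_mul, abs_of_pos hγ2]
    have hsplit := Summable.sum_add_tsum_nat_add N S2
    have hgeom : Summable (fun t : ℕ => ((t:ℝ)+1) * γ^t) := summable_geom_mul' h0 h1
    have hfull : (∑' t : ℕ, ((t:ℝ)+1) * γ^t) = ((1-γ)^2)⁻¹ := tsum_geom_mul' h0 h1
    have hhead : |∑ t ∈ Finset.range N, γ^t * A (t+1)| ≤ B := by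
      calc |∑ t ∈ Finset.range N, γ^t * A (t+1)| ≤ ∑ t ∈ Finset.range N, |γ^t * A (t+1)| :=
            Finset.abs_sum_le_sum_abs _ _
        _ ≤ ∑ t ∈ Finset.range N, |A (t+1)| := by
            refine Finset.sum_le_sum (fun t _ => ?_)
            rw [abs_mul, abs_pow, abs_of_pos h0]
            calc γ^t * |A (t+1)| ≤ 1 * |A (t+1)| :=
                  mul_le_mul_of_nonneg_right (pow_le_one₀ h0.le h1.le) (abs_nonneg _)
              _ = |A (t+1)| := one_mul _
        _ = B := rfl
    have Stail : Summable (fun k : ℕ => γ^(k+N) * A (k+N+1)) := by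
      exact (summable_nat_add_iff (f := fun t : ℕ => γ^t * A (t+1)) N).2 S2
    have htail : |∑' k : ℕ, γ^(k+N) * A (k+N+1)| ≤ (ε/4) * ((1-γ)^2)⁻¹ := by
      have hle : ∀ k : ℕ, |γ^(k+N) * A (k+N+1)| ≤ (ε/4) * (((k+N:ℕ):ℝ)+1) * γ^(k+N) := by
        intro k
        rw [abs_mul, abs_pow, abs_of_pos h0]
        have h2 : |A (k+N+1)| ≤ (ε/4) * ((k+N+1:ℕ):ℝ) := hNbig (k+N+1) (by omega)
        calc γ^(k+N) * |A (k+N+1)| ≤ γ^(k+N) * ((ε/4) * ((k+N+1:ℕ):ℝ)) :=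
              mul_le_mul_of_nonneg_left h2 (pow_nonneg h0.le _)
          _ = (ε/4) * (((k+N:ℕ):ℝ)+1) * γ^(k+N) := by push_cast; ring
      have hsum2 : Summable (fun k : ℕ => (ε/4) * (((k+N:ℕ):ℝ)+1) * γ^(k+N)) := by
        have := ((summable_nat_add_iff (f := fun t : ℕ => ((t:ℝ)+1) * γ^t) N).2 hgeom).mul_left
          (ε/4)
        refine this.congr (fun k => ?_)
        push_cast; ring
      have habs2 : Summable (fun k : ℕ => |γ^(k+N) * A (k+N+1)|) := by
        refine Summable.of_nonneg_of_le (fun k => abs_nonneg _) hle hsum2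
      have habs : |∑' k : ℕ, γ^(k+N) * A (k+N+1)| ≤ ∑' k : ℕ, |γ^(k+N) * A (k+N+1)| := by
        simpa only [Real.norm_eq_abs] using norm_tsum_le_tsum_norm
          (f := fun k : ℕ => γ^(k+N) * A (k+N+1)) (by simpa only [Real.norm_eq_abs] using habs2)
      have h3 : (∑' k : ℕ, |γ^(k+N) * A (k+N+1)|)
          ≤ ∑' k : ℕ, (ε/4) * (((k+N:ℕ):ℝ)+1) * γ^(k+N) :=
        Summable.tsum_le_tsum hle habs2 hsum2
      have h4 : (∑' k : ℕ, (ε/4) * (((k+N:ℕ):ℝ)+1) * γ^(k+N)) ≤ (ε/4) * ((1-γ)^2)⁻¹ := by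
        have heq : (∑' k : ℕ, (ε/4) * (((k+N:ℕ):ℝ)+1) * γ^(k+N))
            = (ε/4) * ∑' k : ℕ, (((k+N:ℕ):ℝ)+1) * γ^(k+N) := by
          rw [← tsum_mul_left]; congr 1; funext k; ring
        rw [heq, ← hfull]
        refine mul_le_mul_of_nonneg_left ?_ hε4.le
        have hfs := Summable.sum_add_tsum_nat_add N hgeom
        have hhead0 : 0 ≤ ∑ t ∈ Finset.range N, ((t:ℝ)+1) * γ^t :=
          Finset.sum_nonneg (fun t _ => by positivity)
        have : (∑' k : ℕ, (((k+N:ℕ):ℝ)+1) * γ^(k+N)) = ∑' k : ℕ, (((k:ℝ)+N)+1) * γ^(k+N) := by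
          congr 1; funext k; push_cast; ring
        rw [this]
        linarith [hfs]
      linarith [habs, h3, h4]
    calc (1-γ)^2 * |∑' t : ℕ, γ^t * A (t+1)|
        = (1-γ)^2 * |(∑ t ∈ Finset.range N, γ^t * A (t+1)) + ∑' k : ℕ, γ^(k+N) * A (k+N+1)| := by
          rw [hsplit]
      _ ≤ (1-γ)^2 * (B + (ε/4) * ((1-γ)^2)⁻¹) := by
          refine mul_le_mul_of_nonneg_left ?_ hγ2.le
          calc |(∑ t ∈ Finset.range N, γ^t * A (t+1)) + ∑' k : ℕ, γ^(k+N) * A (k+N+1)|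
              ≤ |∑ t ∈ Finset.range N, γ^t * A (t+1)| + |∑' k : ℕ, γ^(k+N) * A (k+N+1)| :=
                abs_add_le _ _
            _ ≤ B + (ε/4) * ((1-γ)^2)⁻¹ := add_le_add hhead htail
      _ = (1-γ)^2 * B + ε/4 := by rw [mul_add, mul_left_comm, mul_inv_cancel₀ hγ2.ne', mul_one]
  have hcont : Tendsto (fun γ : ℝ => (1-γ)^2 * B) (𝓝[<] (1:ℝ)) (𝓝 0) := by
    have : Tendsto (fun γ : ℝ => (1-γ)^2 * B) (𝓝 (1:ℝ)) (𝓝 ((1-1)^2 * B)) := by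
      exact (((tendsto_const_nhds.sub tendsto_id).pow 2).mul tendsto_const_nhds)
    simpa using this.mono_left nhdsWithin_le_nhds
  have h1 : ∀ᶠ γ in 𝓝[<] (1:ℝ), (1-γ)^2 * B < ε/2 := by
    have := hcont.eventually (eventually_lt_nhds (by linarith : (0:ℝ) < ε/2))
    exact this
  have h2 : ∀ᶠ γ in 𝓝[<] (1:ℝ), γ ∈ Set.Ioo (0:ℝ) 1 := by
    exact Ioo_mem_nhdsLT_of_mem (by constructor <;> norm_num)
  filter_upwards [h1, h2] with γ hg1 hg2
  rw [Real.norm_eq_abs]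
  calc |(1 - γ) * ∑' t : ℕ, γ^t * a t| ≤ (1-γ)^2 * B + ε/4 := main γ hg2.1 hg2.2
    _ < ε/2 + ε/4 := by linarith
    _ < ε := by linarith

private lemma rational_tendsto (p q : Polynomial ℝ)
    (hq : ∀ γ ∈ Set.Ioo (0:ℝ) 1, q.eval γ ≠ 0)
    (h0 : Tendsto (fun γ : ℝ => (1-γ) * (p.eval γ / q.eval γ)) (𝓝[<] (1:ℝ)) (𝓝 0)) :
    ∃ c, Tendsto (fun γ : ℝ => p.eval γ / q.eval γ) (𝓝[<] (1:ℝ)) (𝓝 c) := by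
  classical
  have hqne : q ≠ 0 := by
    intro h; exact hq (1/2) (by norm_num) (by simp [h])
  by_cases hp : p = 0
  · exact ⟨0, by simpa [hp] using tendsto_const_nhds⟩
  set a := p.rootMultiplicity 1 with ha
  set b := q.rootMultiplicity 1 with hb
  obtain ⟨p₁, hp₁, hp₁nd⟩ := p.exists_eq_pow_rootMultiplicity_mul_and_not_dvd hp 1
  obtain ⟨q₁, hq₁, hq₁nd⟩ := q.exists_eq_pow_rootMultiplicity_mul_and_not_dvd hqne 1
  have hp₁1 : p₁.eval 1 ≠ 0 := fun h => hp₁nd (Polynomial.dvd_iff_isRoot.2 h)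
  have hq₁1 : q₁.eval 1 ≠ 0 := fun h => hq₁nd (Polynomial.dvd_iff_isRoot.2 h)
  have hcontq₁ : ContinuousAt (fun γ : ℝ => q₁.eval γ) 1 := (Polynomial.continuous q₁).continuousAt
  have hcontp₁ : ContinuousAt (fun γ : ℝ => p₁.eval γ) 1 := (Polynomial.continuous p₁).continuousAt
  have hev : ∀ᶠ γ : ℝ in 𝓝[<] (1:ℝ), q₁.eval γ ≠ 0 ∧ γ < 1 := by
    filter_upwards [(hcontq₁.eventually_ne hq₁1).filter_mono nhdsWithin_le_nhds,
      self_mem_nhdsWithin] with γ h1 h2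
    exact ⟨h1, h2⟩
  have hpe : ∀ γ : ℝ, p.eval γ = (γ-1)^a * p₁.eval γ := by
    intro γ; conv_lhs => rw [hp₁]
    simp [Polynomial.eval_mul, Polynomial.eval_pow, ha]
  have hqe : ∀ γ : ℝ, q.eval γ = (γ-1)^b * q₁.eval γ := by
    intro γ; conv_lhs => rw [hq₁]
    simp [Polynomial.eval_mul, Polynomial.eval_pow, hb]
  rcases le_or_gt b a with hab | hba
  · refine ⟨(1-1:ℝ)^(a-b) * (p₁.eval 1 / q₁.eval 1), ?_⟩
    have hF : Tendsto (fun γ : ℝ => (γ-1)^(a-b) * (p₁.eval γ / q₁.eval γ)) (𝓝[<] (1:ℝ))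
        (𝓝 ((1-1:ℝ)^(a-b) * (p₁.eval 1 / q₁.eval 1))) := by
      have : ContinuousAt (fun γ : ℝ => (γ-1)^(a-b) * (p₁.eval γ / q₁.eval γ)) 1 := by
        exact ((continuousAt_id.sub continuousAt_const).pow _).mul (hcontp₁.div hcontq₁ hq₁1)
      simpa [sub_self] using this.continuousWithinAt.tendsto
    refine hF.congr' ?_
    filter_upwards [hev] with γ ⟨hγq, hγ1⟩
    have hγne : γ - 1 ≠ 0 := sub_ne_zero.2 (ne_of_lt hγ1)
    rw [hpe, hqe]
    have haeq : a = b + (a - b) := (Nat.add_sub_cancel' hab).symm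
    rw [haeq, pow_add]
    rw [mul_assoc, mul_div_mul_left _ _ (pow_ne_zero b hγne), Nat.add_sub_cancel_left,
      mul_div_assoc]
  · exfalso
    obtain ⟨m, hm⟩ := Nat.exists_eq_add_of_lt hba
    set G : ℝ → ℝ := fun γ => (γ-1)^m * ((1-γ) * (p.eval γ / q.eval γ)) with hG
    have hG0 : Tendsto G (𝓝[<] (1:ℝ)) (𝓝 (((1:ℝ)-1)^m * 0)) := by
      refine Tendsto.mul ?_ h0
      exact (((continuousAt_id.sub continuousAt_const).pow
        m).continuousWithinAt.tendsto)
    have hGeq : ∀ᶠ γ : ℝ in 𝓝[<] (1:ℝ), G γ = -(p₁.eval γ / q₁.eval γ) := by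
      filter_upwards [hev] with γ ⟨hγq, hγ1⟩
      have hγne : γ - 1 ≠ 0 := sub_ne_zero.2 (ne_of_lt hγ1)
      rw [hG]
      simp only []
      rw [hpe, hqe, hm]
      field_simp
      ring
    have hGlim : Tendsto G (𝓝[<] (1:ℝ)) (𝓝 (-(p₁.eval 1 / q₁.eval 1))) := by
      refine Tendsto.congr' (hGeq.mono fun γ h => h.symm) ?_
      exact ((hcontp₁.div hcontq₁ hq₁1).neg.continuousWithinAt.tendsto)
    have := tendsto_nhds_unique hG0 hGlim
    have hne : -(p₁.eval 1 / q₁.eval 1) ≠ 0 := by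
      simp [_root_.div_eq_zero_iff, hp₁1, hq₁1]
    apply hne
    rw [← this, mul_zero]

/-- **Existence of the relative value function (Abel limit of a centered function under a
unichain stochastic matrix).** If `M` is row-stochastic, the Cesàro limits
`μ(s') = lim_T (1/T) ∑_{t<T} (M^t)(s,s')` exist and do not depend on `s`, and
`∑_{s'} μ(s') f(s') = 0`, then for each `γ ∈ (0,1)` the series `∑_t γ^t (M^t f)(s)`
converges absolutely, and for every `s` the limit as `γ → 1⁻` of its sum exists. -/
theorem relative_value_exists
    {S : Type} [Fintype S] [DecidableEq S] [Nonempty S]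
    (M : Matrix S S ℝ)
    (hnn : ∀ s s', 0 ≤ M s s') (hrow : ∀ s, ∑ s', M s s' = 1)
    (μ : S → ℝ)
    (hμ : ∀ s s', Tendsto (fun T : ℕ => (∑ t ∈ range T, (M ^ t) s s') / (T : ℝ))
      atTop (𝓝 (μ s')))
    (f : S → ℝ) (hf : ∑ s', μ s' * f s' = 0) (s : S) :
    (∀ γ ∈ Set.Ioo (0 : ℝ) 1, Summable fun t : ℕ => |γ ^ t * ((M ^ t).mulVec f) s|) ∧
      ∃ c : ℝ, Tendsto (fun γ : ℝ => ∑' t : ℕ, γ ^ t * ((M ^ t).mulVec f) s)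
        (𝓝[<] (1 : ℝ)) (𝓝 c) := by
  classical
  -- powers are row-stochastic
  have hpow : ∀ t : ℕ, (∀ u v, 0 ≤ (M^t) u v) ∧ (∀ u, ∑ v, (M^t) u v = 1) := by
    intro t
    induction t with
    | zero =>
      refine ⟨fun u v => ?_, fun u => ?_⟩
      · rw [pow_zero]; rcases eq_or_ne u v with h | h <;> simp [Matrix.one_apply, h]
      · rw [pow_zero]; simp [Matrix.one_apply]
    | succ t ih =>
      refine ⟨fun u v => ?_, fun u => ?_⟩
      · rw [pow_succ, Matrix.mul_apply]
        exact Finset.sum_nonneg fun k _ => mul_nonneg (ih.1 u k) (hnn k v)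
      · rw [pow_succ]
        simp only [Matrix.mul_apply]
        rw [Finset.sum_comm]
        calc ∑ k, ∑ v, (M^t) u k * M k v = ∑ k, (M^t) u k * ∑ v, M k v := by
              simp [Finset.mul_sum]
          _ = 1 := by simp [hrow, ih.2 u]
  have hle1 : ∀ (t : ℕ) (u v : S), (M^t) u v ≤ 1 := by
    intro t u v
    calc (M^t) u v ≤ ∑ v', (M^t) u v' :=
          Finset.single_le_sum (fun v' _ => (hpow t).1 u v') (Finset.mem_univ v)
      _ = 1 := (hpow t).2 u
  set C : ℝ := ∑ s', |f s'| with hCdef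
  have hC0 : 0 ≤ C := Finset.sum_nonneg (fun s' _ => abs_nonneg _)
  have haC : ∀ (t : ℕ) (u : S), |((M^t).mulVec f) u| ≤ C := by
    intro t u
    calc |((M^t).mulVec f) u| = |∑ s', (M^t) u s' * f s'| := by
          simp [Matrix.mulVec, dotProduct]
      _ ≤ ∑ s', |(M^t) u s' * f s'| := Finset.abs_sum_le_sum_abs _ _
      _ ≤ ∑ s', |f s'| := by
          refine Finset.sum_le_sum (fun s' _ => ?_)
          rw [abs_mul, abs_of_nonneg ((hpow t).1 u s')]
          calc (M^t) u s' * |f s'| ≤ 1 * |f s'| :=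
                mul_le_mul_of_nonneg_right (hle1 t u s') (abs_nonneg _)
            _ = |f s'| := one_mul _
      _ = C := rfl
  -- first conjunct
  have hsummable : ∀ γ ∈ Set.Ioo (0 : ℝ) 1,
      Summable fun t : ℕ => |γ ^ t * ((M ^ t).mulVec f) s| := by
    rintro γ ⟨h0, h1⟩
    refine Summable.of_nonneg_of_le (fun t => abs_nonneg _) (fun t => ?_)
      ((summable_geometric_of_lt_one h0.le h1).mul_right C)
    rw [abs_mul, abs_pow, abs_of_pos h0]
    exact mul_le_mul_of_nonneg_left (haC t s) (pow_nonneg h0.le t)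
  refine ⟨hsummable, ?_⟩
  -- Cesàro limit of the centered sequence is zero
  have hces : Tendsto (fun T : ℕ => (∑ t ∈ range T, ((M^t).mulVec f) s)/(T:ℝ)) atTop (𝓝 0) := by
    have h := tendsto_finset_sum Finset.univ
      (fun s' (_ : s' ∈ Finset.univ) => (hμ s s').mul_const (f s'))
    rw [hf] at h
    refine h.congr (fun T => ?_)
    calc ∑ s', (∑ t ∈ range T, (M^t) s s')/(T:ℝ) * f s'
        = ∑ s', (∑ t ∈ range T, (M^t) s s' * f s')/(T:ℝ) := by
          refine Finset.sum_congr rfl fun s' _ => ?_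
          rw [div_mul_eq_mul_div, Finset.sum_mul]
      _ = (∑ s', ∑ t ∈ range T, (M^t) s s' * f s')/(T:ℝ) := by rw [Finset.sum_div]
      _ = (∑ t ∈ range T, ∑ s', (M^t) s s' * f s')/(T:ℝ) := by rw [Finset.sum_comm]
      _ = (∑ t ∈ range T, ((M^t).mulVec f) s)/(T:ℝ) := by
          simp [Matrix.mulVec, dotProduct]
  have habel := abel_mean_zero (fun t => ((M^t).mulVec f) s) C (fun t => haC t s) hces
  -- polynomial numerator and denominator
  set Mp : Matrix S S (Polynomial ℝ) :=
    (1 : Matrix S S (Polynomial ℝ)) - (Polynomial.X : Polynomial ℝ) • (M.map Polynomial.C)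
    with hMp
  set q : Polynomial ℝ := Mp.det with hqdef
  set p : Polynomial ℝ := ∑ s', Mp.adjugate s s' * Polynomial.C (f s') with hpdef
  have hmap : ∀ γ : ℝ, Mp.map (Polynomial.evalRingHom γ) = (1 : Matrix S S ℝ) - γ • M := by
    intro γ
    ext i j
    rcases eq_or_ne i j with h | h <;>
      simp [hMp, Matrix.map_apply, Matrix.sub_apply, Matrix.smul_apply, Matrix.one_apply, h] <;>
      ring
  have hqev : ∀ γ : ℝ, q.eval γ = ((1 : Matrix S S ℝ) - γ • M).det := by
    intro γ
    rw [hqdef, ← hmap γ]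
    have := (Polynomial.evalRingHom γ).map_det Mp
    simpa [RingHom.mapMatrix_apply] using this
  have hpev : ∀ γ : ℝ,
      p.eval γ = ∑ s', (((1 : Matrix S S ℝ) - γ • M).adjugate) s s' * f s' := by
    intro γ
    rw [hpdef, ← hmap γ]
    have hadj := (Polynomial.evalRingHom γ).map_adjugate Mp
    rw [RingHom.mapMatrix_apply, RingHom.mapMatrix_apply] at hadj
    rw [← hadj]
    simp [Polynomial.eval_finset_sum, Matrix.map_apply]
  -- nonvanishing of the denominator on (0,1)
  have hdet : ∀ γ : ℝ, 0 < γ → γ < 1 → ((1 : Matrix S S ℝ) - γ • M).det ≠ 0 := by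
    intro γ h0 h1
    refine det_ne_zero_of_sum_row_lt_diag (fun k => ?_)
    have hdiag : ((1 : Matrix S S ℝ) - γ • M) k k = 1 - γ * M k k := by
      simp [Matrix.sub_apply, Matrix.one_apply]
    have hoff : ∀ j, j ≠ k → ((1 : Matrix S S ℝ) - γ • M) k j = -(γ * M k j) := by
      intro j hj
      simp [Matrix.sub_apply, Matrix.one_apply, (Ne.symm hj)]
    have hMk1 : M k k ≤ 1 := by simpa using hle1 1 k k
    have hMk0 : 0 ≤ M k k := hnn k k
    have hsum : ∑ j ∈ Finset.univ.erase k, ‖((1 : Matrix S S ℝ) - γ • M) k j‖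
        = γ * (1 - M k k) := by
      rw [Finset.sum_congr rfl (fun j hj => ?_)]
      · rw [← Finset.mul_sum, Finset.sum_erase_eq_sub (Finset.mem_univ k), hrow]
      · rw [hoff j (Finset.ne_of_mem_erase hj), Real.norm_eq_abs, abs_neg,
          abs_of_nonneg (mul_nonneg h0.le (hnn k j))]
    rw [hsum, hdiag, Real.norm_eq_abs, abs_of_pos (by nlinarith)]
    nlinarith
  -- the Abel sum equals the rational function on (0,1)
  have gident : ∀ γ : ℝ, 0 < γ → γ < 1 →
      (∑' t : ℕ, γ^t * ((M^t).mulVec f) s) = p.eval γ / q.eval γ := by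
    intro γ h0 h1
    rw [hpev, hqev]
    set A : Matrix S S ℝ := (1 : Matrix S S ℝ) - γ • M with hA
    set g : S → ℝ := fun u => ∑' t : ℕ, γ^t * ((M^t).mulVec f) u with hg
    have hCt : ∀ u : S, ∀ t : ℕ, |((M^t).mulVec f) u| ≤ C * ((t:ℝ)+1) := by
      intro u t
      calc |((M^t).mulVec f) u| ≤ C := haC t u
        _ ≤ C * ((t:ℝ)+1) := by nlinarith [Nat.cast_nonneg (α := ℝ) t]
    have Sg : ∀ u : S, Summable (fun t : ℕ => γ^t * ((M^t).mulVec f) u) :=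
      fun u => summable_geom_mul h0 h1 _ C (hCt u)
    have hMg : ∀ u : S, (M.mulVec g) u = ∑' t : ℕ, γ^t * ((M^(t+1)).mulVec f) u := by
      intro u
      have swap : (M.mulVec g) u = ∑ s', ∑' t : ℕ, M u s' * (γ^t * ((M^t).mulVec f) s') := by
        simp only [Matrix.mulVec, dotProduct, hg]
        exact Finset.sum_congr rfl (fun s' _ => (tsum_mul_left).symm)
      rw [swap, ← Summable.tsum_finsetSum (fun s' _ => (Sg s').mul_left (M u s'))]
      congr 1; funext t
      have hstep : ((M^(t+1)).mulVec f) u = ∑ s', M u s' * ((M^t).mulVec f) s' := by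
        rw [pow_succ' M t, ← Matrix.mulVec_mulVec]
        simp [Matrix.mulVec, dotProduct]
      rw [hstep, Finset.mul_sum]
      exact Finset.sum_congr rfl (fun s' _ => by ring)
    have hsol : A.mulVec g = f := by
      funext u
      rw [hA, Matrix.sub_mulVec, Matrix.one_mulVec, Matrix.smul_mulVec]
      have : (g - γ • M.mulVec g) u = g u - γ * (M.mulVec g) u := rfl
      rw [this, hMg u]
      have hshift : γ * (∑' t : ℕ, γ^t * ((M^(t+1)).mulVec f) u)
          = ∑' t : ℕ, γ^(t+1) * ((M^(t+1)).mulVec f) u := by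
        rw [← tsum_mul_left]
        congr 1; funext t; ring
      have hzero := Summable.tsum_eq_zero_add (Sg u)
      rw [hg]
      simp only []
      rw [hzero, hshift]
      simp [Matrix.one_mulVec]
    have hadj : A.adjugate.mulVec f = A.det • g := by
      calc A.adjugate.mulVec f = A.adjugate.mulVec (A.mulVec g) := by rw [hsol]
        _ = (A.adjugate * A).mulVec g := Matrix.mulVec_mulVec g A.adjugate A
        _ = (A.det • (1 : Matrix S S ℝ)).mulVec g := by rw [Matrix.adjugate_mul]
        _ = A.det • g := by rw [Matrix.smul_mulVec, Matrix.one_mulVec]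
    have hentry : ∑ s', A.adjugate s s' * f s' = A.det * g s := by
      have := congrFun hadj s
      simpa [Matrix.mulVec, dotProduct] using this
    rw [hentry, mul_div_assoc, mul_comm, div_mul_cancel₀ _ (hdet γ h0 h1)]
  -- transfer the Abel-mean limit to the rational function and conclude
  have hev : ∀ᶠ γ : ℝ in 𝓝[<] (1:ℝ), γ ∈ Set.Ioo (0:ℝ) 1 :=
    Ioo_mem_nhdsLT_of_mem (by constructor <;> norm_num)
  have h0' : Tendsto (fun γ : ℝ => (1-γ) * (p.eval γ / q.eval γ)) (𝓝[<] (1:ℝ)) (𝓝 0) := by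
    refine habel.congr' ?_
    filter_upwards [hev] with γ hγ
    rw [gident γ hγ.1 hγ.2]
  obtain ⟨c, hc⟩ := rational_tendsto p q (fun γ hγ => by rw [hqev]; exact hdet γ hγ.1 hγ.2) h0'
  refine ⟨c, ?_⟩
  refine hc.congr' ?_
  filter_upwards [hev] with γ hγ
  exact (gident γ hγ.1 hγ.2).symm

end
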